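/- Let M ≥ 1 and consider the random walk S_k = Y₁ + ⋯ + Y_k where Y_j are i.i.d. taking values +1, −1 each with probability 1/4 and 0 with probability 1/2. Then P(S_{M²} ≤ −M) is bounded below by a positive constant independent of M, for all M large enough. -/

import Mathlib

open Finset

def wt {m : ℕ} (g : Fin m → Bool) : ℕ := #(univ.filter (fun j => g j = true))

def e4 : Fin 4 ≃ Bool × Bool where
  toFun := ![(true,false),(true,true),(false,false),(false,true)]
  invFun p := match p with
    | (true,false) => 0 | (true,true) => 1 | (false,false) => 2 | (false,true) => 3
  left_inv := by decide
  right_inv := by decide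

lemma e4_val (v : Fin 4) :
    ((if (e4 v).1 then (1:ℤ) else 0) + (if (e4 v).2 then (1:ℤ) else 0))
      = (![0, 1, -1, 0] : Fin 4 → ℤ) v + 1 := by fin_cases v <;> rfl

def E (n : ℕ) : (Fin n → Fin 4) ≃ (Fin (n+n) → Bool) :=
  (Equiv.arrowCongr (Equiv.refl (Fin n)) e4).trans <|
    (Equiv.arrowProdEquivProdArrow (Fin n) (fun _ => Bool) (fun _ => Bool)).trans <|
      ((Equiv.sumArrowEquivProdArrow (Fin n) (Fin n) Bool).symm).trans <|
        Equiv.arrowCongr finSumFinEquiv (Equiv.refl Bool)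

lemma wt_E (n : ℕ) (i : Fin n → Fin 4) :
    (wt (E n i) : ℤ) = (∑ j, (![0, 1, -1, 0] : Fin 4 → ℤ) (i j)) + n := by
  have h1 : (wt (E n i) : ℤ) = ∑ j : Fin (n+n), (if E n i j then (1:ℤ) else 0) := by
    rw [wt, card_filter]
    push_cast
    exact Finset.sum_congr rfl (by simp)
  rw [h1, ← Equiv.sum_comp finSumFinEquiv (fun j => if E n i j then (1:ℤ) else 0),
    Fintype.sum_sum_type]
  have hx : ∀ x : Fin n ⊕ Fin n, E n i (finSumFinEquiv x)
      = Sum.elim (fun c => (e4 (i c)).1) (fun c => (e4 (i c)).2) x := by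
    intro x
    simp only [E, Equiv.trans_apply, Equiv.arrowCongr_apply, Equiv.coe_refl,
      Function.comp_apply, Equiv.symm_apply_apply, Equiv.sumArrowEquivProdArrow,
      Equiv.arrowProdEquivProdArrow, Equiv.coe_fn_symm_mk, Equiv.coe_fn_mk,
      Function.comp, id, Equiv.refl_symm, Equiv.refl_apply]
  have hl : ∀ j : Fin n, E n i (finSumFinEquiv (Sum.inl j)) = (e4 (i j)).1 :=
    fun j => hx (Sum.inl j)
  have hr : ∀ j : Fin n, E n i (finSumFinEquiv (Sum.inr j)) = (e4 (i j)).2 :=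
    fun j => hx (Sum.inr j)
  simp only [hl, hr, ← Finset.sum_add_distrib]
  rw [Finset.sum_congr rfl (fun j _ => e4_val (i j)), Finset.sum_add_distrib]
  simp [mul_comm]


def wtEquiv (m k : ℕ) : {g : Fin m → Bool // wt g = k} ≃ {s : Finset (Fin m) // #s = k} where
  toFun g := ⟨univ.filter (fun j => g.1 j = true), g.2⟩
  invFun s := ⟨fun j => decide (j ∈ s.1), by
    have : (univ.filter (fun j => decide (j ∈ s.1) = true)) = s.1 := by ext j; simp
    simp [wt, this, s.2]⟩
  left_inv g := by ext j; simp
  right_inv s := by ext j; simp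

lemma card_wt_eq (m k : ℕ) :
    #(univ.filter (fun g : Fin m → Bool => wt g = k)) = (m).choose k := by
  rw [← Fintype.card_subtype]
  rw [Fintype.card_congr (wtEquiv m k)]
  simp

lemma card_wt_le (m t : ℕ) :
    Nat.card {g : Fin m → Bool // wt g ≤ t} = ∑ k ∈ range (t+1), m.choose k := by
  rw [Nat.card_eq_fintype_card, Fintype.card_subtype]
  rw [Finset.card_eq_sum_card_fiberwise (f := wt) (t := range (t+1))
    (fun g hg => by simp_all [Nat.lt_succ_iff])]
  refine Finset.sum_congr rfl (fun k hk => ?_)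
  rw [Finset.filter_filter]
  rw [← card_wt_eq m k]
  congr 1
  ext g
  simp only [mem_filter, mem_univ, true_and]
  exact ⟨fun h => h.2, fun h => ⟨by simp [h, Nat.lt_succ_iff.mp (mem_range.mp hk)], h⟩⟩

lemma moment_id (m : ℕ) :
    ∑ k ∈ range (m+1), (2*(k:ℝ) - m)^2 * (m.choose k) = (m:ℝ) * 2^m := by
  induction m with
  | zero => norm_num
  | succ m ih =>
    have hsum : ∑ k ∈ range (m+1), (m.choose k : ℝ) = 2^m := by
      have hn := Nat.sum_range_choose m
      calc ∑ k ∈ range (m+1), (m.choose k : ℝ)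
          = ((∑ k ∈ range (m+1), m.choose k : ℕ) : ℝ) := by push_cast; rfl
        _ = 2^m := by rw [hn]; push_cast; ring
    rw [Finset.sum_range_succ' _ (m+1)]
    have key : ∀ k ∈ range (m+1),
        (2*(((k+1:ℕ)):ℝ) - ((m+1:ℕ):ℝ))^2 * (((m+1).choose (k+1)):ℝ)
          = (2*(k:ℝ)+1 - m)^2 * (m.choose k) + (2*(k:ℝ)+1-m)^2 * (m.choose (k+1)) := by
      intro k _
      rw [Nat.choose_succ_succ]
      push_cast
      ring
    rw [Finset.sum_congr rfl key, Finset.sum_add_distrib]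
    have third : ∑ k ∈ range (m+1), (2*(k:ℝ)+1-m)^2 * (m.choose (k+1))
        = (∑ k ∈ range (m+1), (2*(k:ℝ)-1-m)^2 * (m.choose k)) - ((m:ℝ)+1)^2 := by
      have h2 : ∑ k ∈ range (m+2), (2*(k:ℝ)-1-m)^2 * (m.choose k)
          = (∑ k ∈ range (m+1), (2*(((k+1:ℕ)):ℝ)-1-m)^2 * (m.choose (k+1)))
            + (2*((0:ℕ):ℝ)-1-m)^2 * (m.choose 0) :=
        Finset.sum_range_succ' (fun k => (2*(k:ℝ)-1-m)^2 * (m.choose k)) (m+1)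
      have h2' : ∑ k ∈ range (m+1), (2*(((k+1:ℕ)):ℝ)-1-m)^2 * (m.choose (k+1))
          = ∑ k ∈ range (m+1), (2*(k:ℝ)+1-m)^2 * (m.choose (k+1)) :=
        Finset.sum_congr rfl (fun k _ => by push_cast; ring)
      have h3 : ∑ k ∈ range (m+2), (2*(k:ℝ)-1-m)^2 * (m.choose k)
          = ∑ k ∈ range (m+1), (2*(k:ℝ)-1-m)^2 * (m.choose k) := by
        rw [Finset.sum_range_succ]
        simp
      rw [h3, h2'] at h2
      simp only [Nat.choose_zero_right, Nat.cast_zero, Nat.cast_one] at h2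
      nlinarith [h2]
    rw [third]
    have expand : (∑ k ∈ range (m+1), (2*(k:ℝ)+1-m)^2 * (m.choose k))
        + (∑ k ∈ range (m+1), (2*(k:ℝ)-1-m)^2 * (m.choose k))
          = 2 * ((m:ℝ) * 2^m) + 2 * 2^m := by
      have hc : ∀ k ∈ range (m+1),
          (2*(k:ℝ)+1-m)^2 * (m.choose k) + (2*(k:ℝ)-1-m)^2 * (m.choose k)
            = 2 * ((2*(k:ℝ)-m)^2 * (m.choose k)) + 2 * (m.choose k) := fun k _ => by ring
      rw [← Finset.sum_add_distrib, Finset.sum_congr rfl hc, Finset.sum_add_distrib,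
        ← Finset.mul_sum, ← Finset.mul_sum, ih, hsum]
    simp only [Nat.choose_zero_right]
    push_cast
    linear_combination expand


lemma central_lb' (M n : ℕ) (hM : 1 ≤ M) (hMn : M ≤ n) (hnr : (n:ℝ) = (M:ℝ)^2) :
    (2:ℝ)^(2*n) ≤ 2*(2*(M:ℝ)+1) * (((2*n).choose n) : ℝ) := by
  set m := 2*n with hm
  have hsum : ∑ k ∈ range (m+1), (m.choose k : ℝ) = 2^m := by
    have hnn := Nat.sum_range_choose m
    calc ∑ k ∈ range (m+1), (m.choose k : ℝ)
        = ((∑ k ∈ range (m+1), m.choose k : ℕ) : ℝ) := by push_cast; rfl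
      _ = 2^m := by rw [hnn]; push_cast; ring
  set P : ℕ → Prop := fun k => ((k:ℤ) - n)^2 ≤ (M:ℤ)^2 with hP
  have hsplit : ∑ k ∈ range (m+1), (m.choose k : ℝ)
      = ∑ k ∈ (range (m+1)).filter P, (m.choose k : ℝ)
        + ∑ k ∈ (range (m+1)).filter (fun k => ¬ P k), (m.choose k : ℝ) :=
    (Finset.sum_filter_add_sum_filter_not _ _ _).symm
  have hmcast : (m:ℝ) = 2*(n:ℝ) := by push_cast [hm]; ring
  have htail : ∑ k ∈ (range (m+1)).filter (fun k => ¬ P k), (m.choose k : ℝ)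
      ≤ (1:ℝ)/2 * 2^m := by
    have hle : ∀ k ∈ (range (m+1)).filter (fun k => ¬ P k),
        (m.choose k : ℝ) ≤ (2*(k:ℝ) - m)^2 * (m.choose k) / (4*((M:ℝ)+1)^2) := by
      intro k hk
      have hk' : ¬ P k := (Finset.mem_filter.mp hk).2
      have hkk : (M:ℤ)^2 < ((k:ℤ) - n)^2 := by simp only [hP, not_le] at hk'; exact hk'
      have habs : ((M:ℤ)+1)^2 ≤ ((k:ℤ) - n)^2 := by
        rcases le_or_gt |(k:ℤ)-(n:ℤ)| (M:ℤ) with h | h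
        · exfalso
          have := sq_le_sq' (neg_le_of_abs_le h) (le_of_abs_le h)
          omega
        · have h' : (M:ℤ)+1 ≤ |(k:ℤ)-(n:ℤ)| := Int.add_one_le_iff.mpr h
          calc ((M:ℤ)+1)^2 ≤ |(k:ℤ)-(n:ℤ)|^2 := by
                apply pow_le_pow_left₀ (by positivity) h'
            _ = ((k:ℤ)-(n:ℤ))^2 := sq_abs _
      have habsR : ((M:ℝ)+1)^2 ≤ ((k:ℝ) - n)^2 := by exact_mod_cast habs
      have h4 : (2*(k:ℝ) - m)^2 = 4 * ((k:ℝ) - n)^2 := by rw [hmcast]; ring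
      rw [le_div_iff₀ (by positivity), h4]
      have hc : (0:ℝ) ≤ (m.choose k : ℝ) := by positivity
      nlinarith [habsR, hc]
    calc ∑ k ∈ (range (m+1)).filter (fun k => ¬ P k), (m.choose k : ℝ)
        ≤ ∑ k ∈ (range (m+1)).filter (fun k => ¬ P k),
            (2*(k:ℝ) - m)^2 * (m.choose k) / (4*((M:ℝ)+1)^2) := Finset.sum_le_sum hle
      _ ≤ ∑ k ∈ range (m+1), (2*(k:ℝ) - m)^2 * (m.choose k) / (4*((M:ℝ)+1)^2) := by
          apply Finset.sum_le_sum_of_subset_of_nonneg (Finset.filter_subset _ _)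
          intro k _ _
          positivity
      _ = ((m:ℝ) * 2^m) / (4*((M:ℝ)+1)^2) := by
          rw [← Finset.sum_div, moment_id]
      _ ≤ (1:ℝ)/2 * 2^m := by
          rw [div_le_iff₀ (by positivity)]
          have hmr : (m:ℝ) = 2*(M:ℝ)^2 := by rw [hmcast, hnr]
          rw [hmr]
          have : (M:ℝ)^2 ≤ ((M:ℝ)+1)^2 := by nlinarith [Nat.cast_nonneg (α := ℝ) M]
          nlinarith [pow_pos (show (0:ℝ) < 2 by norm_num) m]
  have hcent : ∑ k ∈ (range (m+1)).filter P, (m.choose k : ℝ)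
      ≤ (2*(M:ℝ)+1) * (m.choose n : ℝ) := by
    have hmax : ∀ k ∈ (range (m+1)).filter P, (m.choose k : ℝ) ≤ (m.choose n : ℝ) := by
      intro k _
      have := Nat.choose_le_middle k m
      have hmid : m / 2 = n := by omega
      rw [hmid] at this
      exact_mod_cast this
    have hcard : ((range (m+1)).filter P).card ≤ 2*M + 1 := by
      have hsub : (range (m+1)).filter P ⊆ Icc (n - M) (n + M) := by
        intro k hk
        have hk' := (Finset.mem_filter.mp hk).2
        simp only [hP] at hk'
        have h1 : |(k:ℤ) - n| ≤ (M:ℤ) := abs_le_of_sq_le_sq hk' (by positivity)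
        have h2 := abs_le.mp h1
        rw [Finset.mem_Icc]
        omega
      calc ((range (m+1)).filter P).card ≤ (Icc (n - M) (n + M)).card :=
            Finset.card_le_card hsub
        _ = n + M + 1 - (n - M) := Nat.card_Icc _ _
        _ ≤ 2*M + 1 := by omega
    calc ∑ k ∈ (range (m+1)).filter P, (m.choose k : ℝ)
        ≤ ∑ k ∈ (range (m+1)).filter P, (m.choose n : ℝ) := Finset.sum_le_sum hmax
      _ = ((range (m+1)).filter P).card * (m.choose n : ℝ) := by
          rw [Finset.sum_const, nsmul_eq_mul]
      _ ≤ (2*(M:ℝ)+1) * (m.choose n : ℝ) := by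
          apply mul_le_mul_of_nonneg_right _ (by positivity)
          exact_mod_cast hcard
  have hfin : (2:ℝ)^m ≤ (2*(M:ℝ)+1) * (m.choose n : ℝ) + (1:ℝ)/2 * 2^m := by
    calc (2:ℝ)^m = ∑ k ∈ range (m+1), (m.choose k : ℝ) := hsum.symm
      _ = _ := hsplit
      _ ≤ _ := add_le_add hcent htail
  linarith

lemma ratio_lb (n M : ℕ) (h2 : 2*M ≤ n) :
    ∀ j, j ≤ 2*M →
      ((2*n).choose n : ℝ) * ((n:ℝ) - 2*M)^j ≤ ((2*n).choose (n - j) : ℝ) * ((n:ℝ) + 2*M)^j := by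
  intro j
  induction j with
  | zero => simp
  | succ j ih =>
    intro hj
    have hj' : j ≤ 2*M := by omega
    have IH := ih hj'
    have hnm : (0:ℝ) ≤ (n:ℝ) - 2*M := by
      have : ((2*M : ℕ):ℝ) ≤ (n:ℝ) := by exact_mod_cast h2
      push_cast at this; linarith
    have hpos : (0:ℝ) < (n:ℝ) + 2*M := by
      have : (0:ℝ) < (n:ℝ) := by
        have : 1 ≤ n := by omega
        exact_mod_cast Nat.lt_of_lt_of_le Nat.zero_lt_one this
      positivity
    -- nat identity : C(2n, n-j) * (n-j) = C(2n, n-j-1) * (n+j+1)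
    have hid : ((2*n).choose (n - j) : ℝ) * ((n:ℝ) - j)
        = ((2*n).choose (n - (j+1)) : ℝ) * ((n:ℝ) + j + 1) := by
      have hnat := Nat.choose_succ_right_eq (2*n) (n - (j+1))
      have hs : n - (j+1) + 1 = n - j := by omega
      have hs2 : 2*n - (n - (j+1)) = n + j + 1 := by omega
      rw [hs, hs2] at hnat
      have hjle : j ≤ n := by omega
      have hc := congrArg (Nat.cast : ℕ → ℝ) hnat
      push_cast [Nat.cast_sub hjle] at hc
      exact hc
    -- step
    have hCj : (0:ℝ) ≤ ((2*n).choose (n - j) : ℝ) := by positivity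
    have key : ((2*n).choose (n-j) : ℝ) * ((n:ℝ) - 2*M)
        ≤ ((2*n).choose (n-(j+1)) : ℝ) * ((n:ℝ) + 2*M) := by
      have hq : (0:ℝ) < (n:ℝ) + j + 1 := by positivity
      rw [← mul_le_mul_iff_of_pos_right hq]
      calc ((2*n).choose (n-j) : ℝ) * ((n:ℝ) - 2*M) * ((n:ℝ)+j+1)
          ≤ ((2*n).choose (n-j) : ℝ) * ((n:ℝ) - j) * ((n:ℝ)+2*M) := by
            have hpoly : ((n:ℝ) - 2*M) * ((n:ℝ)+j+1) ≤ ((n:ℝ) - j) * ((n:ℝ)+2*M) := by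
              have hjj : (j:ℝ) ≤ 2*(M:ℝ) - 1 := by
                have : j + 1 ≤ 2*M := hj
                have := (Nat.cast_le (α := ℝ)).mpr this
                push_cast at this; linarith
              have hnn : (0:ℝ) ≤ (n:ℝ) := Nat.cast_nonneg n
              nlinarith
            calc ((2*n).choose (n-j) : ℝ) * ((n:ℝ) - 2*M) * ((n:ℝ)+j+1)
                = ((2*n).choose (n-j) : ℝ) * (((n:ℝ) - 2*M) * ((n:ℝ)+j+1)) := by ring
              _ ≤ ((2*n).choose (n-j) : ℝ) * (((n:ℝ) - j) * ((n:ℝ)+2*M)) :=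
                  mul_le_mul_of_nonneg_left hpoly hCj
              _ = ((2*n).choose (n-j) : ℝ) * ((n:ℝ) - j) * ((n:ℝ)+2*M) := by ring
        _ = ((2*n).choose (n-(j+1)) : ℝ) * ((n:ℝ)+2*M) * ((n:ℝ)+j+1) := by
            linear_combination ((n:ℝ)+2*M) * hid
    calc ((2*n).choose n : ℝ) * ((n:ℝ) - 2*M)^(j+1)
        = (((2*n).choose n : ℝ) * ((n:ℝ) - 2*M)^j) * ((n:ℝ) - 2*M) := by ring
      _ ≤ (((2*n).choose (n-j) : ℝ) * ((n:ℝ) + 2*M)^j) * ((n:ℝ) - 2*M) :=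
          mul_le_mul_of_nonneg_right IH hnm
      _ = (((2*n).choose (n-j) : ℝ) * ((n:ℝ) - 2*M)) * ((n:ℝ) + 2*M)^j := by ring
      _ ≤ (((2*n).choose (n-(j+1)) : ℝ) * ((n:ℝ) + 2*M)) * ((n:ℝ) + 2*M)^j := by
          apply mul_le_mul_of_nonneg_right key (by positivity)
      _ = ((2*n).choose (n-(j+1)) : ℝ) * ((n:ℝ) + 2*M)^(j+1) := by ring

lemma exp_bound (M : ℕ) (hM : 4 ≤ M) :
    Real.exp (-16) * ((M:ℝ)+2)^(2*M) ≤ ((M:ℝ)-2)^(2*M) := by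
  have hM4 : (4:ℝ) ≤ (M:ℝ) := by exact_mod_cast hM
  have hx : (0:ℝ) < (M:ℝ) - 2 := by linarith
  set x : ℝ := 4 / ((M:ℝ) - 2) with hxdef
  have hxpos : 0 < x := by positivity
  have hsplit : (M:ℝ) + 2 = ((M:ℝ) - 2) * (1 + x) := by
    rw [hxdef]
    field_simp
    ring
  have h1x : 1 + x ≤ Real.exp x := by
    have := Real.add_one_le_exp x
    linarith
  have hxM : 2*(M:ℝ)*x ≤ 16 := by
    rw [hxdef]
    have heq : 2*(M:ℝ)*(4/((M:ℝ)-2)) = 8*(M:ℝ)/((M:ℝ)-2) := by ring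
    rw [heq, div_le_iff₀ hx]
    linarith
  calc Real.exp (-16) * ((M:ℝ)+2)^(2*M)
      = Real.exp (-16) * (((M:ℝ)-2)*(1+x))^(2*M) := by rw [← hsplit]
    _ = Real.exp (-16) * (1+x)^(2*M) * ((M:ℝ)-2)^(2*M) := by rw [mul_pow]; ring
    _ ≤ Real.exp (-16) * (Real.exp x)^(2*M) * ((M:ℝ)-2)^(2*M) := by
        apply mul_le_mul_of_nonneg_right _ (by positivity)
        apply mul_le_mul_of_nonneg_left _ (by positivity)
        exact pow_le_pow_left₀ (by positivity) h1x _
    _ = Real.exp (((2*M : ℕ):ℝ)*x - 16) * ((M:ℝ)-2)^(2*M) := by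
        rw [← Real.exp_nat_mul, ← Real.exp_add]
        ring_nf
    _ ≤ 1 * ((M:ℝ)-2)^(2*M) := by
        apply mul_le_mul_of_nonneg_right _ (by positivity)
        rw [Real.exp_le_one_iff]
        push_cast
        linarith
    _ = ((M:ℝ)-2)^(2*M) := one_mul _

lemma count_eq (M : ℕ) (hM : 1 ≤ M) :
    Nat.card {i : Fin (M ^ 2) → Fin 4 //
        (∑ j, (![0, 1, -1, 0] : Fin 4 → ℤ) (i j)) ≤ -(M : ℤ)}
      = ∑ k ∈ range (M^2 - M + 1), (M^2 + M^2).choose k := by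
  have hMn : M ≤ M^2 := Nat.le_self_pow (by norm_num) M
  rw [Nat.card_congr (Equiv.subtypeEquiv (E (M^2)) (fun i => ?_))]
  · exact card_wt_le (M^2 + M^2) (M^2 - M)
  · have hw := wt_E (M^2) i
    constructor
    · intro h; omega
    · intro h; omega


/-- For the random walk `S_k = Y₁ + ⋯ + Y_k` with i.i.d. steps taking values `+1, -1` each with
probability `1/4` and `0` with probability `1/2` (coded by `Y(1)=Y(4)=0, Y(2)=1, Y(3)=-1` on
`{1,2,3,4}^{M²}` with the uniform product measure), the probability `P(S_{M²} ≤ -M)` is bounded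
below by a positive constant independent of `M`, for all `M` large enough. -/
theorem stmt_10 :
    ∃ c : ℝ, 0 < c ∧ ∃ M₀ : ℕ, ∀ M : ℕ, M₀ ≤ M → 1 ≤ M →
      c ≤ (Nat.card {i : Fin (M ^ 2) → Fin 4 //
          (∑ j, (![0, 1, -1, 0] : Fin 4 → ℤ) (i j)) ≤ -(M : ℤ)} : ℝ) / 4 ^ (M ^ 2) := by
  refine ⟨Real.exp (-16) / 6, by positivity, 4, fun M hM4 hM1 => ?_⟩
  set n := M^2 with hn
  have hMn : M ≤ n := Nat.le_self_pow (by norm_num) M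
  have h2M : 2*M ≤ n := by
    rw [hn, pow_two]
    exact Nat.mul_le_mul_right _ (by omega)
  have hnr : (n:ℝ) = (M:ℝ)^2 := by rw [hn]; push_cast; ring
  have hMr : (4:ℝ) ≤ (M:ℝ) := by exact_mod_cast hM4
  -- the count
  have hcount : (Nat.card {i : Fin (M ^ 2) → Fin 4 //
      (∑ j, (![0, 1, -1, 0] : Fin 4 → ℤ) (i j)) ≤ -(M : ℤ)} : ℝ)
        = ∑ k ∈ range (n - M + 1), ((2*n).choose k : ℝ) := by
    rw [count_eq M hM1]
    have h2n : n + n = 2*n := by ring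
    rw [h2n]
    push_cast
    rfl
  set Cr : ℝ := ((2*n).choose n : ℝ) with hCr
  have hCpos : (0:ℝ) ≤ Cr := by positivity
  -- ratio bound for each k in the window
  set r : ℝ := ((n:ℝ) - 2*M) / ((n:ℝ) + 2*M) with hrdef
  have hdenpos : (0:ℝ) < (n:ℝ) + 2*M := by
    have : (0:ℝ) < (n:ℝ) := by rw [hnr]; positivity
    positivity
  have hnumnn : (0:ℝ) ≤ (n:ℝ) - 2*M := by
    have : ((2*M : ℕ):ℝ) ≤ (n:ℝ) := by exact_mod_cast h2M
    push_cast at this; linarith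
  have hr0 : 0 ≤ r := by positivity
  have hr1 : r ≤ 1 := by
    rw [hrdef, div_le_one hdenpos]
    have : (0:ℝ) ≤ (M:ℝ) := by positivity
    linarith
  have hrM : r = ((M:ℝ) - 2) / ((M:ℝ) + 2) := by
    rw [hrdef, div_eq_div_iff hdenpos.ne' (show ((M:ℝ)+2) ≠ 0 by positivity), hnr]
    ring
  have hrexp : Real.exp (-16) ≤ r^(2*M) := by
    rw [hrM, div_pow, le_div_iff₀ (by positivity)]
    exact exp_bound M hM4
  have hterm : ∀ k ∈ Icc (n - 2*M) (n - M),
      Real.exp (-16) * Cr ≤ ((2*n).choose k : ℝ) := by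
    intro k hk
    rw [Finset.mem_Icc] at hk
    have hj : n - k ≤ 2*M := by omega
    have hkeq : k = n - (n - k) := by omega
    have hrat := ratio_lb n M h2M (n - k) hj
    rw [← hkeq] at hrat
    have hrj : r^(2*M) ≤ r^(n-k) := pow_le_pow_of_le_one hr0 hr1 hj
    calc Real.exp (-16) * Cr ≤ r^(2*M) * Cr :=
          mul_le_mul_of_nonneg_right hrexp hCpos
      _ ≤ r^(n-k) * Cr := mul_le_mul_of_nonneg_right hrj hCpos
      _ ≤ ((2*n).choose k : ℝ) := by
          rw [hrdef, div_pow, div_mul_eq_mul_div, div_le_iff₀ (by positivity)]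
          calc ((n:ℝ) - 2*M)^(n-k) * Cr = Cr * ((n:ℝ) - 2*M)^(n-k) := by ring
            _ ≤ ((2*n).choose k : ℝ) * ((n:ℝ) + 2*M)^(n-k) := hrat
  -- sum over the window
  have hinc : Icc (n - 2*M) (n - M) ⊆ range (n - M + 1) := by
    intro k hk
    rw [Finset.mem_Icc] at hk
    rw [Finset.mem_range]
    omega
  have hwin : ((M:ℝ)+1) * (Real.exp (-16) * Cr)
      ≤ ∑ k ∈ Icc (n - 2*M) (n - M), ((2*n).choose k : ℝ) := by
    have hcard : (Icc (n - 2*M) (n - M)).card = M + 1 := by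
      rw [Nat.card_Icc]; omega
    have := Finset.card_nsmul_le_sum (Icc (n - 2*M) (n - M))
      (fun k => ((2*n).choose k : ℝ)) (Real.exp (-16) * Cr) hterm
    rw [hcard] at this
    calc ((M:ℝ)+1) * (Real.exp (-16) * Cr)
        = (M+1) • (Real.exp (-16) * Cr) := by rw [nsmul_eq_mul]; push_cast; ring
      _ ≤ _ := this
  have hsumge : ((M:ℝ)+1) * (Real.exp (-16) * Cr)
      ≤ ∑ k ∈ range (n - M + 1), ((2*n).choose k : ℝ) :=
    hwin.trans (Finset.sum_le_sum_of_subset_of_nonneg hinc (fun k _ _ => by positivity))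
  -- central bound
  have hcent := central_lb' M n hM1 hMn hnr
  have h24 : (2:ℝ)^(2*n) = 4^n := by rw [pow_mul]; norm_num
  rw [h24] at hcent
  -- put it together
  rw [hcount, le_div_iff₀ (by positivity)]
  have hfinal : Real.exp (-16) / 6 * 4^n ≤ ((M:ℝ)+1) * (Real.exp (-16) * Cr) := by
    have hEpos : (0:ℝ) < Real.exp (-16) := Real.exp_pos _
    calc Real.exp (-16) / 6 * 4^n
        ≤ Real.exp (-16) / 6 * (2*(2*(M:ℝ)+1) * Cr) := by
          apply mul_le_mul_of_nonneg_left hcent (by positivity)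
      _ ≤ ((M:ℝ)+1) * (Real.exp (-16) * Cr) := by
          have h6 : 2*(2*(M:ℝ)+1) ≤ 6*((M:ℝ)+1) := by linarith
          nlinarith [mul_nonneg hEpos.le hCpos, hCpos, hEpos]
  exact hfinal.trans hsumge
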